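/- Let p be an odd prime, 1 ≤ w < p, and 𝓘 ⊆ {0,…,p−1} nonempty with |𝓘| ≤ (p−1)/2; for w = 1 define the p²-periodic sequence (h_u) over F_p by h_u = 1 if u mod p² ∈ ∪_{l∈𝓘}(D_l ∪ {lp}) and h_u = 0 otherwise. Then the generating polynomial H(X) = Σ_{u<p²} h_u X^u ∈ F_p[X] satisfies (X−1)^{p−1} | H(X) but (X−1)^p ∤ H(X); consequently the linear complexity of (h_u) over F_p equals p² − p + 1. -/

import Mathlib

/-- The polynomial quotient `q_{p,w}(u)`. -/
def polyQuot (p w u : ℕ) : ℕ := ((((u : ℤ) ^ w - (u : ℤ) ^ (w * p)) / (p : ℤ)) % (p : ℤ)).toNat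

/-- Generating polynomial over `F_p` of one period of the sequence `(h_u)` for `w = 1`:
`h_u = 1` iff `u ∈ ∪_{l∈𝓘}(D_l ∪ {lp})`. -/
noncomputable def genPolyP1 (p : ℕ) (I : Finset ℕ) : Polynomial (ZMod p) :=
  ∑ u ∈ Finset.range (p ^ 2),
    if (Nat.gcd u p = 1 ∧ polyQuot p 1 u ∈ I) ∨ (∃ l ∈ I, u = l * p) then Polynomial.X ^ u else 0

open Polynomial Finset

variable (p : ℕ) [hp : Fact p.Prime]

lemma pq_lt (u : ℕ) : polyQuot p 1 u < p := by
  have hp0 : (0:ℤ) < p := by exact_mod_cast hp.out.pos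
  unfold polyQuot
  have := Int.emod_lt_of_pos ((((u : ℤ) ^ 1 - (u : ℤ) ^ (1 * p)) / (p : ℤ))) hp0
  omega

lemma pq_cast (u : ℕ) :
    ((polyQuot p 1 u : ℕ) : ZMod p) = ((((u:ℤ) - (u:ℤ)^p) / (p:ℤ) : ℤ) : ZMod p) := by
  unfold polyQuot
  have h1 : (0:ℤ) ≤ (((u : ℤ) ^ 1 - (u : ℤ) ^ (1 * p)) / (p : ℤ)) % (p : ℤ) :=
    Int.emod_nonneg _ (by exact_mod_cast hp.out.ne_zero)
  rw [← Int.cast_natCast, Int.toNat_of_nonneg h1, ZMod.intCast_mod, pow_one, one_mul]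

lemma fermat_dvd (u : ℕ) : (p:ℤ) ∣ (u:ℤ) - (u:ℤ)^p := by
  have h : ((((u:ℤ) - (u:ℤ)^p : ℤ)) : ZMod p) = 0 := by
    push_cast
    rw [ZMod.pow_card]
    ring
  exact (ZMod.intCast_zmod_eq_zero_iff_dvd _ p).mp h

lemma pq_shift (a j : ℕ) :
    ((polyQuot p 1 (a + p * j) : ℕ) : ZMod p) = (polyQuot p 1 a : ZMod p) + j := by
  rw [pq_cast, pq_cast]
  set u : ℕ := a + p * j with hu
  obtain ⟨u', hu'⟩ := fermat_dvd p u
  obtain ⟨a', ha'⟩ := fermat_dvd p a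
  have hpne : (p:ℤ) ≠ 0 := by exact_mod_cast hp.out.ne_zero
  have hdivu : ((u:ℤ) - (u:ℤ)^p) / p = u' := by rw [hu']; exact Int.mul_ediv_cancel_left _ hpne
  have hdiva : ((a:ℤ) - (a:ℤ)^p) / p = a' := by rw [ha']; exact Int.mul_ediv_cancel_left _ hpne
  rw [hdivu, hdiva]
  -- p^2 ∣ u^p - a^p
  have hsub : (p:ℤ) ∣ (u:ℤ) - (a:ℤ) := by
    rw [hu]; push_cast; ring_nf; exact ⟨j, by ring⟩
  have h2 : ((p:ℤ)^(1+1)) ∣ (u:ℤ)^(p^1) - (a:ℤ)^(p^1) := dvd_sub_pow_of_dvd_sub hsub 1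
  simp only [pow_one] at h2
  -- p ∣ u' - a' - j
  have key : (p:ℤ) ∣ u' - a' - j := by
    have h3 : (p:ℤ) * (u' - a' - j) = ((a:ℤ)^p - (u:ℤ)^p) := by
      rw [mul_sub, mul_sub, ← hu', ← ha', hu]; push_cast; ring
    have h4 : (p:ℤ)^(1+1) ∣ (p:ℤ) * (u' - a' - j) := by
      rw [h3, ← neg_sub ((u:ℤ)^p)]
      exact dvd_neg.mpr h2
    have h5 : (p:ℤ)*(p:ℤ) ∣ (p:ℤ) * (u' - a' - j) := by
      have : (p:ℤ)^(1+1) = p * p := by ring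
      rwa [this] at h4
    exact (mul_dvd_mul_iff_left hpne).mp h5
  have : ((u' - a' - j : ℤ) : ZMod p) = 0 := (ZMod.intCast_zmod_eq_zero_iff_dvd _ p).mpr key
  push_cast at this
  linear_combination this

lemma nat_eq_of_cast_eq {x y : ℕ} (hx : x < p) (hy : y < p)
    (h : (x : ZMod p) = (y : ZMod p)) : x = y := by
  have := congrArg ZMod.val h
  rwa [ZMod.val_cast_of_lt hx, ZMod.val_cast_of_lt hy] at this

lemma count_lemma (I : Finset ℕ) (hI : I ⊆ range p) (a : ℕ) :
    ((range p).filter (fun j => polyQuot p 1 (a + p * j) ∈ I)).card = I.card := by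
  haveI : NeZero p := ⟨hp.out.ne_zero⟩
  apply Finset.card_bij (fun j _ => polyQuot p 1 (a + p * j))
  · intro j hj; exact (mem_filter.mp hj).2
  · intro j1 h1 j2 h2 heq
    have e1 := pq_shift p a j1
    have e2 := pq_shift p a j2
    rw [heq, e2] at e1
    have : (j2 : ZMod p) = j1 := by linear_combination e1
    exact (nat_eq_of_cast_eq p (mem_range.mp (mem_filter.mp h2).1)
      (mem_range.mp (mem_filter.mp h1).1) this).symm
  · intro l hl
    set c : ZMod p := (polyQuot p 1 a : ZMod p) with hc
    refine ⟨((l : ZMod p) - c).val, ?_, ?_⟩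
    · have hcast : ((polyQuot p 1 (a + p * ((l : ZMod p) - c).val) : ℕ) : ZMod p)
          = (l : ZMod p) := by
        rw [pq_shift, ← hc, ZMod.natCast_val, ZMod.cast_id]; ring
      have heq : polyQuot p 1 (a + p * ((l : ZMod p) - c).val) = l :=
        nat_eq_of_cast_eq p (pq_lt p _) (mem_range.mp (hI hl)) hcast
      exact mem_filter.mpr ⟨mem_range.mpr (ZMod.val_lt _), by rw [heq]; exact hl⟩
    · have hcast : ((polyQuot p 1 (a + p * ((l : ZMod p) - c).val) : ℕ) : ZMod p)
          = (l : ZMod p) := by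
        rw [pq_shift, ← hc, ZMod.natCast_val, ZMod.cast_id]; ring
      exact nat_eq_of_cast_eq p (pq_lt p _) (mem_range.mp (hI hl)) hcast

lemma choose_cast_add (a j i : ℕ) (ha : a < p) (hi : i < p) :
    (((a + p * j).choose i : ℕ) : ZMod p) = (a.choose i : ZMod p) := by
  have h := Choose.choose_modEq_choose_mod_mul_choose_div_nat (p := p) (n := a + p * j) (k := i)
  have h2 := (ZMod.natCast_eq_natCast_iff _ _ _).mpr h
  rw [Nat.add_mul_mod_self_left, Nat.add_mul_div_left _ _ hp.out.pos,
    Nat.mod_eq_of_lt ha, Nat.mod_eq_of_lt hi, Nat.div_eq_of_lt hi, Nat.div_eq_of_lt ha] at h2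
  simpa using h2

lemma choose_cast_mul (j i : ℕ) (hi : i < p) :
    ((p * j).choose i : ZMod p) = if i = 0 then 1 else 0 := by
  have := choose_cast_add p 0 j i hp.out.pos hi
  simp only [zero_add] at this
  rw [this]
  rcases Nat.eq_zero_or_pos i with h | h
  · simp [h]
  · have hne : i ≠ 0 := by omega
    simp [Nat.choose_eq_zero_of_lt h, hne]

lemma hockey (n i : ℕ) : ∑ a ∈ range n, a.choose i = n.choose (i + 1) := by
  induction n with
  | zero => simp
  | succ n ih => rw [sum_range_succ, ih, Nat.choose_succ_succ]; ring

lemma sum_pp {M : Type*} [AddCommMonoid M] (f : ℕ → M) :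
    ∑ u ∈ range (p * p), f u = ∑ a ∈ range p, ∑ j ∈ range p, f (a + p * j) := by
  rw [← Finset.sum_product']
  apply Finset.sum_nbij' (i := fun u => (u % p, u / p)) (j := fun x => x.1 + p * x.2)
  · intro u hu
    have hu := mem_range.mp hu
    refine mem_product.mpr ⟨mem_range.mpr (Nat.mod_lt _ hp.out.pos), mem_range.mpr ?_⟩
    exact Nat.div_lt_of_lt_mul (by omega)
  · intro x hx
    obtain ⟨h1, h2⟩ := mem_product.mp hx
    have h1 := mem_range.mp h1; have h2 := mem_range.mp h2
    exact mem_range.mpr (by nlinarith)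
  · intro u hu; simp [Nat.mod_add_div]
  · intro x hx
    obtain ⟨h1, h2⟩ := mem_product.mp hx
    have h1 := mem_range.mp h1
    simp [Nat.add_mul_mod_self_left, Nat.mod_eq_of_lt h1,
      Nat.add_mul_div_left _ _ hp.out.pos, Nat.div_eq_of_lt h1]
  · intro u hu; rw [Nat.mod_add_div]

lemma gcd_eq_one_iff (u : ℕ) : Nat.gcd u p = 1 ↔ ¬ p ∣ u := by
  rw [Nat.gcd_comm]
  exact hp.out.coprime_iff_not_dvd

lemma main_sum (I : Finset ℕ) (hI : I ⊆ range p) (i : ℕ) (hi : i < p) :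
    (∑ u ∈ range (p ^ 2), if (Nat.gcd u p = 1 ∧ polyQuot p 1 u ∈ I) ∨ (∃ l ∈ I, u = l * p)
      then ((u.choose i : ℕ) : ZMod p) else 0)
    = if i = p - 1 then (I.card : ZMod p) else 0 := by
  have hp1 : 2 ≤ p := hp.out.two_le
  rw [sq, sum_pp]
  have hinner : ∀ a ∈ range p,
      (∑ j ∈ range p, if (Nat.gcd (a + p * j) p = 1 ∧ polyQuot p 1 (a + p * j) ∈ I)
          ∨ (∃ l ∈ I, a + p * j = l * p) then (((a + p * j).choose i : ℕ) : ZMod p) else 0)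
      = if a = 0 then (if i = 0 then (I.card : ZMod p) else 0)
        else (I.card : ZMod p) * (a.choose i : ZMod p) := by
    intro a ha
    have ha' := mem_range.mp ha
    by_cases h0 : a = 0
    · subst h0
      simp only [if_pos rfl]
      have hterm : ∀ j ∈ range p,
          (if (Nat.gcd (0 + p * j) p = 1 ∧ polyQuot p 1 (0 + p * j) ∈ I)
            ∨ (∃ l ∈ I, 0 + p * j = l * p) then (((0 + p * j).choose i : ℕ) : ZMod p) else 0)
          = if j ∈ I then (if i = 0 then (1 : ZMod p) else 0) else 0 := by
        intro j hj
        rw [zero_add]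
        have hc1 : ¬ (Nat.gcd (p * j) p = 1 ∧ polyQuot p 1 (p * j) ∈ I) := by
          rw [gcd_eq_one_iff]
          exact fun h => h.1 (Dvd.intro j rfl)
        have hc2 : (∃ l ∈ I, p * j = l * p) ↔ j ∈ I := by
          constructor
          · rintro ⟨l, hl, hlp⟩
            have : j = l := Nat.eq_of_mul_eq_mul_left hp.out.pos (by rw [hlp, mul_comm])
            rwa [this]
          · intro hj; exact ⟨j, hj, (mul_comm p j)⟩
        rw [choose_cast_mul p j i hi]
        by_cases hji : j ∈ I
        · rw [if_pos (Or.inr (hc2.mpr hji)), if_pos hji]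
        · rw [if_neg, if_neg hji]
          rintro (h | h)
          · exact hc1 h
          · exact hji (hc2.mp h)
      rw [Finset.sum_congr rfl hterm]
      by_cases hi0 : i = 0
      · simp only [if_pos hi0]
        rw [Finset.sum_ite_mem, Finset.inter_eq_right.mpr hI, Finset.sum_const,
          nsmul_eq_mul, mul_one]
        simp
      · simp only [if_neg hi0, ite_self, Finset.sum_const_zero]
        simp
    · rw [if_neg h0]
      have ha0 : 0 < a := Nat.pos_of_ne_zero h0
      have hterm : ∀ j ∈ range p,
          (if (Nat.gcd (a + p * j) p = 1 ∧ polyQuot p 1 (a + p * j) ∈ I)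
            ∨ (∃ l ∈ I, a + p * j = l * p) then (((a + p * j).choose i : ℕ) : ZMod p) else 0)
          = if polyQuot p 1 (a + p * j) ∈ I then (a.choose i : ZMod p) else 0 := by
        intro j hj
        have hnd : ¬ p ∣ (a + p * j) := by
          intro hd
          have : p ∣ a := (Nat.dvd_add_right (Dvd.intro j rfl)).mp (by rwa [add_comm] at hd)
          exact absurd (Nat.le_of_dvd ha0 this) (by omega)
        have hgcd : Nat.gcd (a + p * j) p = 1 := (gcd_eq_one_iff p _).mpr hnd
        have hc2 : ¬ (∃ l ∈ I, a + p * j = l * p) := by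
          rintro ⟨l, hl, hlp⟩
          exact hnd ⟨l, by rw [hlp, mul_comm]⟩
        rw [choose_cast_add p a j i ha' hi]
        by_cases hq : polyQuot p 1 (a + p * j) ∈ I
        · rw [if_pos (Or.inl ⟨hgcd, hq⟩), if_pos hq]
        · rw [if_neg, if_neg hq]
          rintro (h | h)
          · exact hq h.2
          · exact hc2 h
      rw [Finset.sum_congr rfl hterm, ← Finset.sum_filter, Finset.sum_const,
        count_lemma p I hI a, nsmul_eq_mul]
  rw [Finset.sum_congr rfl hinner]
  obtain ⟨m, hm⟩ : ∃ m, p = m + 1 := ⟨p - 1, by omega⟩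
  rw [show range p = range (m + 1) from by rw [hm], Finset.sum_range_succ']
  simp only [Nat.succ_ne_zero, ite_false, ite_true, if_true, if_false, Nat.add_eq_zero,
    one_ne_zero, and_false, reduceIte]
  have hsum : ∑ a ∈ range m, (I.card : ZMod p) * ((a + 1).choose i : ZMod p)
      = (I.card : ZMod p) * (((m + 1).choose (i + 1) : ℕ) - ((Nat.choose 0 i : ℕ)) : ZMod p) := by
    rw [← Finset.mul_sum]
    congr 1
    have h1 : (∑ a ∈ range (m + 1), (a.choose i : ZMod p))
        = ∑ a ∈ range m, ((a + 1).choose i : ZMod p) + (Nat.choose 0 i : ZMod p) :=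
      Finset.sum_range_succ' _ m
    have h2 : (∑ a ∈ range (m + 1), (a.choose i : ZMod p)) = ((m + 1).choose (i + 1) : ZMod p) := by
      rw [← Nat.cast_sum, hockey]
    rw [h2] at h1
    push_cast at h1 ⊢
    linear_combination -h1
  rw [hsum]
  by_cases hi0 : i = 0
  · subst hi0
    have hne : ¬ (0 : ℕ) = p - 1 := by omega
    rw [if_neg hne, if_pos rfl]
    have hc : (m + 1).choose 1 = m + 1 := Nat.choose_one_right _
    rw [hc, Nat.choose_self]
    have hz : ((m + 1 : ℕ) : ZMod p) = 0 := by rw [← hm]; exact ZMod.natCast_self p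
    push_cast at hz ⊢
    rw [hz]
    ring
  · rw [if_neg hi0]
    have hc0 : Nat.choose 0 i = 0 := Nat.choose_eq_zero_of_lt (Nat.pos_of_ne_zero hi0)
    rw [hc0]
    by_cases hip : i = p - 1
    · rw [if_pos hip]
      have : i + 1 = m + 1 := by omega
      rw [this, Nat.choose_self]
      push_cast
      ring
    · rw [if_neg hip]
      have hdvd : p ∣ (m + 1).choose (i + 1) := by
        rw [← hm]
        exact hp.out.dvd_choose_self (by omega) (by omega)
      have : (((m + 1).choose (i + 1) : ℕ) : ZMod p) = 0 :=
        (ZMod.natCast_eq_zero_iff _ _).mpr hdvd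
      rw [this]
      push_cast
      ring

theorem stmt_17 (p : ℕ) (I : Finset ℕ) [hp : Fact p.Prime] (hodd : Odd p)
    (hI : I ⊆ Finset.range p) (hIne : I.Nonempty) (hIcard : I.card ≤ (p - 1) / 2) :
    (((Polynomial.X : Polynomial (ZMod p)) - 1) ^ (p - 1) ∣ genPolyP1 p I) ∧
    (¬ ((Polynomial.X : Polynomial (ZMod p)) - 1) ^ p ∣ genPolyP1 p I) ∧
    p ^ 2 - (EuclideanDomain.gcd ((Polynomial.X : Polynomial (ZMod p)) ^ (p ^ 2) - 1)
        (genPolyP1 p I)).natDegree = p ^ 2 - p + 1 := by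
  have hp2 : 2 ≤ p := hp.out.two_le
  set H := genPolyP1 p I with hH
  set e := algEquivAevalXAddC (1 : ZMod p) with he
  -- the image of X - 1 under e is X
  have heX : e ((X : Polynomial (ZMod p)) - 1) = X := by
    rw [he]
    simp [algEquivAevalXAddC, algEquivOfCompEqX]
  -- coefficients of e H
  have hcoeff : ∀ i : ℕ, (e H).coeff i
      = ∑ u ∈ range (p ^ 2), (if (Nat.gcd u p = 1 ∧ polyQuot p 1 u ∈ I) ∨ (∃ l ∈ I, u = l * p)
        then ((u.choose i : ℕ) : ZMod p) else 0) := by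
    intro i
    rw [hH, genPolyP1, map_sum, finset_sum_coeff]
    apply Finset.sum_congr rfl
    intro u hu
    rw [apply_ite e, map_pow, map_zero]
    have heX2 : e (X : Polynomial (ZMod p)) = X + 1 := by
      rw [he]; simp [algEquivAevalXAddC, algEquivOfCompEqX]
    rw [heX2]
    split_ifs
    · rw [coeff_X_add_one_pow]
    · simp
  have hdvd_iff : ∀ (A B : Polynomial (ZMod p)), A ∣ B ↔ e A ∣ e B := by
    intro A B
    constructor
    · rintro ⟨c, rfl⟩
      exact ⟨e c, map_mul e _ _⟩
    · intro h
      have := map_dvd e.symm h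
      simpa using this
  -- coefficient values
  have hcv : ∀ i < p, (e H).coeff i = if i = p - 1 then (I.card : ZMod p) else 0 := by
    intro i hi
    rw [hcoeff]; exact main_sum p I hI i hi
  have hIcard_ne : ((I.card : ℕ) : ZMod p) ≠ 0 := by
    rw [Ne, ZMod.natCast_eq_zero_iff]
    intro hdvd
    have h1 : 0 < I.card := Finset.card_pos.mpr hIne
    have := Nat.le_of_dvd h1 hdvd
    omega
  have part1 : ((X : Polynomial (ZMod p)) - 1) ^ (p - 1) ∣ H := by
    rw [hdvd_iff, map_pow, heX, X_pow_dvd_iff]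
    intro d hd
    rw [hcv d (by omega), if_neg (by omega)]
  have part2 : ¬ ((X : Polynomial (ZMod p)) - 1) ^ p ∣ H := by
    rw [hdvd_iff, map_pow, heX, X_pow_dvd_iff]
    intro hcontra
    have := hcontra (p - 1) (by omega)
    rw [hcv (p - 1) (by omega), if_pos rfl] at this
    exact hIcard_ne this
  refine ⟨part1, part2, ?_⟩
  -- the gcd part
  have hXp : (X : Polynomial (ZMod p)) ^ (p ^ 2) - 1 = ((X : Polynomial (ZMod p)) - 1) ^ (p ^ 2) := by
    rw [sub_pow_char_pow]
    simp
  set g := EuclideanDomain.gcd ((X : Polynomial (ZMod p)) ^ (p ^ 2) - 1) H with hg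
  have hgl : g ∣ ((X : Polynomial (ZMod p)) - 1) ^ (p ^ 2) := by
    rw [← hXp]; exact EuclideanDomain.gcd_dvd_left _ _
  have hgr : g ∣ H := EuclideanDomain.gcd_dvd_right _ _
  have hprime : Prime ((X : Polynomial (ZMod p)) - 1) := by
    have := prime_X_sub_C (1 : ZMod p)
    rwa [map_one] at this
  have hXne : ((X : Polynomial (ZMod p)) - 1) ≠ 0 := by
    have := X_sub_C_ne_zero (1 : ZMod p)
    rwa [map_one] at this
  obtain ⟨k, hk, hassoc⟩ := (dvd_prime_pow hprime _).mp hgl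
  have hdegk : ∀ m : ℕ, (((X : Polynomial (ZMod p)) - 1) ^ m).natDegree = m := by
    intro m
    rw [natDegree_pow]
    have : ((X : Polynomial (ZMod p)) - 1).natDegree = 1 := by
      have := natDegree_X_sub_C (1 : ZMod p)
      rwa [map_one] at this
    rw [this, mul_one]
  have hdl : ((X : Polynomial (ZMod p)) - 1) ^ (p - 1) ∣ g :=
    EuclideanDomain.dvd_gcd (by rw [hXp]; exact pow_dvd_pow _ ((Nat.sub_le p 1).trans (Nat.le_self_pow (by norm_num) p))) part1
  have hk_ge : p - 1 ≤ k := by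
    have hd : ((X : Polynomial (ZMod p)) - 1) ^ (p - 1) ∣ ((X : Polynomial (ZMod p)) - 1) ^ k :=
      hdl.trans hassoc.dvd
    have := natDegree_le_of_dvd hd (pow_ne_zero _ hXne)
    rwa [hdegk, hdegk] at this
  have hk_le : k ≤ p - 1 := by
    by_contra hcon
    push_neg at hcon
    have hpk : ((X : Polynomial (ZMod p)) - 1) ^ p ∣ ((X : Polynomial (ZMod p)) - 1) ^ k :=
      pow_dvd_pow _ (by omega)
    exact part2 ((hpk.trans hassoc.symm.dvd).trans hgr)
  have hkeq : k = p - 1 := le_antisymm hk_le hk_ge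
  have hdeg : g.natDegree = p - 1 := by
    have := degree_eq_degree_of_associated hassoc
    have h2 : g.natDegree = (((X : Polynomial (ZMod p)) - 1) ^ k).natDegree :=
      natDegree_eq_of_degree_eq this
    rw [h2, hdegk, hkeq]
  rw [hdeg]
  have hple : p ≤ p ^ 2 := Nat.le_self_pow (by norm_num) p
  set N := p ^ 2 with hN
  omega
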